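/- arXiv:2210.03604 — 6 statements merged into one kernel-verified Lean document; each statement's English description precedes it below -/
import Mathlib

section
/- Closed form of the battery model recurrence (Lemma 1): For every k ∈ ℕ, the state ŝ_k defined by the battery model recurrence satisfies ŝ_k = (1 − b)^{q_0^k} s₀ + Σ_{l=0}^{k−1} (1 − b)^{q_{l+1}^k} ( f_l · b · χ_{r_l} + a⁺ r_l⁺ + a⁻ r_l⁻ + f_{l+1} − f_l ), where q_l^k = Σ_{i=l}^{k−1} χ_{r_i}. -/
open Finset

/-- Lemma 1: closed form of the battery model recurrence. -/
theorem battery_closed_form (s₀ b ap am : ℝ) (r f : ℕ → ℝ)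
    (shat : ℕ → ℝ) (h0 : shat 0 = s₀)
    (hrec : ∀ t, shat (t + 1) =
      shat t + ap * max (r t) 0 + am * min (r t) 0
        + b * (f t - shat t) * (if r t = 0 then (1 : ℝ) else 0) + f (t + 1) - f t)
    (k : ℕ) :
    shat k = (1 - b) ^ (∑ i ∈ Finset.Ico 0 k, if r i = 0 then (1 : ℕ) else 0) * s₀
      + ∑ l ∈ Finset.range k,
          (1 - b) ^ (∑ i ∈ Finset.Ico (l + 1) k, if r i = 0 then (1 : ℕ) else 0) *
            (f l * b * (if r l = 0 then (1 : ℝ) else 0)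
              + ap * max (r l) 0 + am * min (r l) 0 + f (l + 1) - f l) := by
  induction k with
  | zero => simp [h0]
  | succ k ih =>
    have hsplit : ∀ l, l ≤ k →
        (∑ i ∈ Finset.Ico l (k + 1), if r i = 0 then (1 : ℕ) else 0)
          = (∑ i ∈ Finset.Ico l k, if r i = 0 then (1 : ℕ) else 0)
            + (if r k = 0 then (1 : ℕ) else 0) := by
      intro l hl
      rw [Finset.sum_Ico_succ_top hl]
    rw [hrec k, ih, Finset.sum_range_succ]
    rw [hsplit 0 (Nat.zero_le k)]
    have hsum : ∀ l ∈ Finset.range k,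
        (1 - b) ^ (∑ i ∈ Finset.Ico (l + 1) (k + 1), if r i = 0 then (1 : ℕ) else 0) *
            (f l * b * (if r l = 0 then (1 : ℝ) else 0)
              + ap * max (r l) 0 + am * min (r l) 0 + f (l + 1) - f l)
        = (1 - b) ^ (if r k = 0 then (1 : ℕ) else 0) *
          ((1 - b) ^ (∑ i ∈ Finset.Ico (l + 1) k, if r i = 0 then (1 : ℕ) else 0) *
            (f l * b * (if r l = 0 then (1 : ℝ) else 0)
              + ap * max (r l) 0 + am * min (r l) 0 + f (l + 1) - f l)) := by
      intro l hl
      rw [hsplit (l + 1) (Finset.mem_range.mp hl), pow_add]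
      ring
    rw [Finset.sum_congr rfl hsum, ← Finset.mul_sum, Finset.Ico_self, Finset.sum_empty,
      pow_zero, pow_add]
    by_cases h : r k = 0 <;> simp [h] <;> ring
end

section
/- Evolution of the battery model during a pure request period: if r_i ≠ 0 for all i < k, then the state of the battery model recurrence satisfies ŝ_k = s₀ + a⁺ Σ_{i=0}^{k−1} r_i⁺ + a⁻ Σ_{i=0}^{k−1} r_i⁻ + f_k − f_0. In particular, if additionally r_i > 0 for all i < k and Σ_{i=0}^{k−1} r_i ≠ 0, then a⁺ = ((ŝ_k − f_k) − (s₀ − f_0)) / Σ_{i=0}^{k−1} r_i. -/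
open Finset

/-- Evolution of the battery model during a pure request period, and the
resulting sample formula for `a⁺`. -/
theorem battery_pure_request (s₀ b ap am : ℝ) (r f : ℕ → ℝ)
    (shat : ℕ → ℝ) (h0 : shat 0 = s₀)
    (hrec : ∀ t, shat (t + 1) =
      shat t + ap * max (r t) 0 + am * min (r t) 0
        + b * (f t - shat t) * (if r t = 0 then (1 : ℝ) else 0) + f (t + 1) - f t)
    (k : ℕ) (hr : ∀ i < k, r i ≠ 0) :
    shat k = s₀ + ap * ∑ i ∈ Finset.range k, max (r i) 0
        + am * ∑ i ∈ Finset.range k, min (r i) 0 + f k - f 0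
      ∧ ((∀ i < k, 0 < r i) → (∑ i ∈ Finset.range k, r i) ≠ 0 →
          ap = ((shat k - f k) - (s₀ - f 0)) / ∑ i ∈ Finset.range k, r i) := by
  have main : shat k = s₀ + ap * ∑ i ∈ Finset.range k, max (r i) 0
      + am * ∑ i ∈ Finset.range k, min (r i) 0 + f k - f 0 := by
    induction k with
    | zero => simp [h0]
    | succ n ih =>
      have hn := ih (fun i hi => hr i (Nat.lt_succ_of_lt hi))
      have hrn : r n ≠ 0 := hr n (Nat.lt_succ_self n)
      rw [hrec n, hn, Finset.sum_range_succ, Finset.sum_range_succ, if_neg hrn]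
      ring
  refine ⟨main, fun hpos hne => ?_⟩
  have hmax : ∑ i ∈ Finset.range k, max (r i) 0 = ∑ i ∈ Finset.range k, r i :=
    Finset.sum_congr rfl fun i hi => max_eq_left (le_of_lt (hpos i (Finset.mem_range.mp hi)))
  have hmin : ∑ i ∈ Finset.range k, min (r i) 0 = 0 :=
    Finset.sum_eq_zero fun i hi => min_eq_right (le_of_lt (hpos i (Finset.mem_range.mp hi)))
  rw [eq_div_iff hne, main, hmax, hmin]
  ring
end

section
/- The capped probability simplex is the convex hull of the uniform j-subset measures: for integers 1 ≤ j ≤ N, the set {q ∈ ℝ^N : q_i ≥ 0 for all i, Σ_{i=1}^N q_i = 1, q_i ≤ 1/j for all i} equals the convex hull of the finite set Q = {q ∈ ℝ^N : there exists J ⊆ {1,…,N} with |J| = j such that q_i = 1/j for i ∈ J and q_i = 0 for i ∉ J}. -/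
open Finset

private lemma capped_aux (N j : ℕ) (hj : 1 ≤ j) :
    ∀ n : ℕ, ∀ q : Fin N → ℝ, (∀ i, 0 ≤ q i) → (∑ i, q i = 1) →
      (∀ i, q i ≤ 1 / (j : ℝ)) →
      (univ.filter (fun i => q i ≠ 0 ∧ q i ≠ 1 / (j : ℝ))).card ≤ n →
      q ∈ convexHull ℝ
        {q : Fin N → ℝ | ∃ J : Finset (Fin N), J.card = j ∧
          (∀ i ∈ J, q i = 1 / (j : ℝ)) ∧ ∀ i ∉ J, q i = 0} := by
  have hj0 : (0:ℝ) < j := by exact_mod_cast hj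
  have hjne : (j:ℝ) ≠ 0 := ne_of_gt hj0
  intro n
  induction n with
  | zero =>
    intro q h0 h1 h2 hc
    apply subset_convexHull
    have hall : ∀ i, q i = 0 ∨ q i = 1 / (j:ℝ) := by
      intro i
      by_contra h
      push_neg at h
      have hmem : i ∈ univ.filter (fun i => q i ≠ 0 ∧ q i ≠ 1 / (j : ℝ)) :=
        Finset.mem_filter.mpr ⟨Finset.mem_univ i, h⟩
      have := Finset.card_pos.mpr ⟨i, hmem⟩
      omega
    set J := univ.filter (fun i => q i = 1 / (j:ℝ)) with hJ
    refine ⟨J, ?_, ?_, ?_⟩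
    · have e1 : ∑ i ∈ univ.filter (fun i => q i = 1 / (j:ℝ)), q i
          = (J.card : ℝ) * (1 / (j:ℝ)) := by
        rw [Finset.sum_congr rfl (fun i hi => (Finset.mem_filter.mp hi).2),
          Finset.sum_const, nsmul_eq_mul]
      have e2 : ∑ i ∈ univ.filter (fun i => ¬ q i = 1 / (j:ℝ)), q i = 0 := by
        apply Finset.sum_eq_zero
        intro i hi
        rcases hall i with h | h
        · exact h
        · exact absurd h (Finset.mem_filter.mp hi).2
      have e0 : ∑ i, q i = (J.card : ℝ) * (1 / (j:ℝ)) := by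
        rw [← Finset.sum_filter_add_sum_filter_not univ (fun i => q i = 1 / (j:ℝ)),
          e1, e2, add_zero]
      have hsum : (J.card : ℝ) * (1 / (j:ℝ)) = 1 := by rw [← e0, h1]
      have : (J.card : ℝ) = (j : ℝ) := by
        rw [mul_one_div, div_eq_one_iff_eq hjne] at hsum
        exact hsum
      exact_mod_cast this
    · intro i hi; exact (Finset.mem_filter.mp hi).2
    · intro i hi
      rcases hall i with h | h
      · exact h
      · exact absurd (Finset.mem_filter.mpr ⟨Finset.mem_univ i, h⟩) hi
  | succ n ih =>
    intro q h0 h1 h2 hc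
    set F := univ.filter (fun i => q i ≠ 0 ∧ q i ≠ 1 / (j : ℝ)) with hF
    by_cases hcn : F.card ≤ n
    · exact ih q h0 h1 h2 hcn
    have hFpos : 0 < F.card := by omega
    obtain ⟨i, hi⟩ := Finset.card_pos.mp hFpos
    have hiq : q i ≠ 0 ∧ q i ≠ 1 / (j:ℝ) := (Finset.mem_filter.mp hi).2
    have hqi0 : 0 < q i := lt_of_le_of_ne (h0 i) (Ne.symm hiq.1)
    have hqi1 : q i < 1 / (j:ℝ) := lt_of_le_of_ne (h2 i) hiq.2
    -- there is a second fractional index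
    have hk : ∃ k, k ≠ i ∧ q k ≠ 0 ∧ q k ≠ 1 / (j:ℝ) := by
      by_contra h
      push_neg at h
      set K := (univ.erase i).filter (fun l => q l = 1 / (j:ℝ)) with hK
      have e1 : ∑ l ∈ (univ.erase i).filter (fun l => q l = 1 / (j:ℝ)), q l
          = (K.card : ℝ) * (1 / (j:ℝ)) := by
        rw [Finset.sum_congr rfl (fun l hl => (Finset.mem_filter.mp hl).2),
          Finset.sum_const, nsmul_eq_mul]
      have e2 : ∑ l ∈ (univ.erase i).filter (fun l => ¬ q l = 1 / (j:ℝ)), q l = 0 := by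
        apply Finset.sum_eq_zero
        intro l hl
        have hl' := Finset.mem_filter.mp hl
        have hli : l ≠ i := Finset.ne_of_mem_erase hl'.1
        by_cases hz : q l = 0
        · exact hz
        · exact absurd (h l hli hz) hl'.2
      have herase : ∑ l ∈ univ.erase i, q l = (K.card : ℝ) * (1 / (j:ℝ)) := by
        rw [← Finset.sum_filter_add_sum_filter_not (univ.erase i)
          (fun l => q l = 1 / (j:ℝ)), e1, e2, add_zero]
      have hsum : q i + (K.card : ℝ) * (1 / (j:ℝ)) = 1 := by
        rw [← herase, Finset.add_sum_erase _ _ (Finset.mem_univ i), h1]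
      set c : ℝ := (K.card : ℝ) with hc'
      have hcc : c * (1 / (j:ℝ)) * (j:ℝ) = c := by field_simp
      have hjj : (1 / (j:ℝ)) * (j:ℝ) = 1 := by field_simp
      have hlt : c < (j:ℝ) := by
        have hu : c * (1 / (j:ℝ)) < 1 := by linarith
        nlinarith [mul_lt_mul_of_pos_right hu hj0]
      have hgt : (j:ℝ) - 1 < c := by
        have hu : 1 - c * (1 / (j:ℝ)) < 1 / (j:ℝ) := by linarith
        nlinarith [mul_lt_mul_of_pos_right hu hj0]
      have h1' : K.card < j := by
        rw [hc'] at hlt; exact_mod_cast hlt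
      have h2' : j < K.card + 1 := by
        have hx : (j:ℝ) < c + 1 := by linarith
        rw [hc'] at hx; exact_mod_cast hx
      omega
    obtain ⟨k, hki, hkq⟩ := hk
    have hqk0 : 0 < q k := lt_of_le_of_ne (h0 k) (Ne.symm hkq.1)
    have hqk1 : q k < 1 / (j:ℝ) := lt_of_le_of_ne (h2 k) hkq.2
    have hkF : k ∈ F := Finset.mem_filter.mpr ⟨Finset.mem_univ k, hkq⟩
    set t1 : ℝ := min (1 / (j:ℝ) - q i) (q k) with ht1def
    set t2 : ℝ := min (q i) (1 / (j:ℝ) - q k) with ht2def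
    have ht1 : 0 < t1 := lt_min (by linarith) hqk0
    have ht2 : 0 < t2 := lt_min hqi0 (by linarith)
    have ht1a : t1 ≤ 1 / (j:ℝ) - q i := min_le_left _ _
    have ht1b : t1 ≤ q k := min_le_right _ _
    have ht2a : t2 ≤ q i := min_le_left _ _
    have ht2b : t2 ≤ 1 / (j:ℝ) - q k := min_le_right _ _
    set d : Fin N → ℝ := fun l => if l = i then 1 else if l = k then -1 else 0 with hd
    have hdi : d i = 1 := by simp [hd]
    have hdk : d k = -1 := by simp [hd, hki]
    have hdo : ∀ l, l ≠ i → l ≠ k → d l = 0 := by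
      intro l hl1 hl2; simp [hd, hl1, hl2]
    have hsd : ∑ l, d l = 0 := by
      have he : ∀ l, d l = (if l = i then (1:ℝ) else 0) + (if l = k then (-1:ℝ) else 0) := by
        intro l
        by_cases hl1 : l = i
        · subst hl1; simp [hd, Ne.symm hki, hki]
        · by_cases hl2 : l = k
          · subst hl2; simp [hd, hl1]
          · simp [hd, hl1, hl2]
      rw [Finset.sum_congr rfl (fun l _ => he l), Finset.sum_add_distrib,
        Finset.sum_ite_eq' univ i (fun _ => (1:ℝ)),
        Finset.sum_ite_eq' univ k (fun _ => (-1:ℝ))]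
      simp
    set a : Fin N → ℝ := fun l => q l + t1 * d l with ha
    set b : Fin N → ℝ := fun l => q l - t2 * d l with hb
    have hav : ∀ l, l ≠ i → l ≠ k → a l = q l := by
      intro l hl1 hl2; simp [ha, hdo l hl1 hl2]
    have hbv : ∀ l, l ≠ i → l ≠ k → b l = q l := by
      intro l hl1 hl2; simp [hb, hdo l hl1 hl2]
    have hai : a i = q i + t1 := by simp only [ha]; rw [hdi, mul_one]
    have hak : a k = q k - t1 := by simp only [ha]; rw [hdk]; ring
    have hbi : b i = q i - t2 := by simp only [hb]; rw [hdi, mul_one]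
    have hbk : b k = q k + t2 := by simp only [hb]; rw [hdk]; ring
    have ha0 : ∀ l, 0 ≤ a l := by
      intro l
      by_cases hl1 : l = i
      · subst hl1; rw [hai]; linarith
      · by_cases hl2 : l = k
        · subst hl2; rw [hak]; linarith
        · rw [hav l hl1 hl2]; exact h0 l
    have ha2 : ∀ l, a l ≤ 1 / (j:ℝ) := by
      intro l
      by_cases hl1 : l = i
      · subst hl1; rw [hai]; linarith
      · by_cases hl2 : l = k
        · subst hl2; rw [hak]; linarith
        · rw [hav l hl1 hl2]; exact h2 l
    have ha1 : ∑ l, a l = 1 := by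
      simp only [ha]
      rw [Finset.sum_add_distrib, ← Finset.mul_sum, hsd, h1]
      ring
    have hb0 : ∀ l, 0 ≤ b l := by
      intro l
      by_cases hl1 : l = i
      · subst hl1; rw [hbi]; linarith
      · by_cases hl2 : l = k
        · subst hl2; rw [hbk]; linarith
        · rw [hbv l hl1 hl2]; exact h0 l
    have hb2 : ∀ l, b l ≤ 1 / (j:ℝ) := by
      intro l
      by_cases hl1 : l = i
      · subst hl1; rw [hbi]; linarith
      · by_cases hl2 : l = k
        · subst hl2; rw [hbk]; linarith
        · rw [hbv l hl1 hl2]; exact h2 l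
    have hb1 : ∑ l, b l = 1 := by
      simp only [hb]
      rw [Finset.sum_sub_distrib, ← Finset.mul_sum, hsd, h1]
      ring
    have hsubF : ∀ (c : Fin N → ℝ), (∀ l, l ≠ i → l ≠ k → c l = q l) →
        (univ.filter (fun l => c l ≠ 0 ∧ c l ≠ 1 / (j:ℝ))) ⊆ F := by
      intro c hcv l hl
      rw [Finset.mem_filter] at hl
      by_cases hl1 : l = i
      · subst hl1; exact hi
      · by_cases hl2 : l = k
        · subst hl2; exact hkF
        · rw [hF, Finset.mem_filter]
          refine ⟨Finset.mem_univ l, ?_⟩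
          rw [← hcv l hl1 hl2]
          exact hl.2
    have hcarda : (univ.filter (fun l => a l ≠ 0 ∧ a l ≠ 1 / (j:ℝ))).card ≤ n := by
      have hss : (univ.filter (fun l => a l ≠ 0 ∧ a l ≠ 1 / (j:ℝ))) ⊂ F := by
        refine (Finset.ssubset_iff_of_subset (hsubF a hav)).mpr ?_
        rcases min_cases (1 / (j:ℝ) - q i) (q k) with ⟨he, _⟩ | ⟨he, _⟩
        · refine ⟨i, hi, ?_⟩
          rw [Finset.mem_filter]
          push_neg
          intro _ _
          rw [hai, ht1def, he]
          ring
        · refine ⟨k, hkF, ?_⟩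
          rw [Finset.mem_filter]
          push_neg
          intro _ hcon
          exact absurd (by rw [hak, ht1def, he]; ring) hcon
      have := Finset.card_lt_card hss
      omega
    have hcardb : (univ.filter (fun l => b l ≠ 0 ∧ b l ≠ 1 / (j:ℝ))).card ≤ n := by
      have hss : (univ.filter (fun l => b l ≠ 0 ∧ b l ≠ 1 / (j:ℝ))) ⊂ F := by
        refine (Finset.ssubset_iff_of_subset (hsubF b hbv)).mpr ?_
        rcases min_cases (q i) (1 / (j:ℝ) - q k) with ⟨he, _⟩ | ⟨he, _⟩
        · refine ⟨i, hi, ?_⟩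
          rw [Finset.mem_filter]
          push_neg
          intro _ hcon
          exact absurd (by rw [hbi, ht2def, he]; ring) hcon
        · refine ⟨k, hkF, ?_⟩
          rw [Finset.mem_filter]
          push_neg
          intro _ _
          rw [hbk, ht2def, he]
          ring
      have := Finset.card_lt_card hss
      omega
    have hamem := ih a ha0 ha1 ha2 hcarda
    have hbmem := ih b hb0 hb1 hb2 hcardb
    set s : ℝ := t1 + t2 with hs
    have hs0 : 0 < s := by positivity
    have hco : q = (t2 / s) • a + (t1 / s) • b := by
      funext l
      simp only [Pi.add_apply, Pi.smul_apply, smul_eq_mul, ha, hb]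
      field_simp
      ring
    rw [hco]
    exact (convex_convexHull ℝ _) hamem hbmem
      (div_nonneg ht2.le hs0.le) (div_nonneg ht1.le hs0.le)
      (by rw [← add_div, div_eq_one_iff_eq hs0.ne']; rw [hs]; ring)

/-- The capped probability simplex `{q ∈ Δ^N : q_i ≤ 1/j}` is the convex hull of
the uniform `j`-subset measures. -/
theorem capped_simplex_eq_convexHull_uniform_subset_measures
    (N j : ℕ) (hj : 1 ≤ j) (hjN : j ≤ N) :
    {q : Fin N → ℝ | (∀ i, 0 ≤ q i) ∧ (∑ i, q i = 1) ∧ ∀ i, q i ≤ 1 / (j : ℝ)} =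
      convexHull ℝ
        {q : Fin N → ℝ | ∃ J : Finset (Fin N), J.card = j ∧
          (∀ i ∈ J, q i = 1 / (j : ℝ)) ∧ ∀ i ∉ J, q i = 0} := by
  have hj0 : (0:ℝ) < j := by exact_mod_cast hj
  apply Set.Subset.antisymm
  · rintro q ⟨h0, h1, h2⟩
    exact capped_aux N j hj _ q h0 h1 h2 le_rfl
  · apply convexHull_min
    · rintro q ⟨J, hJc, hJin, hJout⟩
      refine ⟨?_, ?_, ?_⟩
      · intro i
        by_cases h : i ∈ J
        · rw [hJin i h]; positivity
        · rw [hJout i h]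
      · rw [← Finset.sum_subset (Finset.subset_univ J) (fun i _ h => hJout i h)]
        rw [Finset.sum_congr rfl hJin, Finset.sum_const, nsmul_eq_mul, hJc]
        field_simp
      · intro i
        by_cases h : i ∈ J
        · rw [hJin i h]
        · rw [hJout i h]; positivity
    · intro x hx y hy α β hα hβ hαβ
      obtain ⟨hx0, hx1, hx2⟩ := hx
      obtain ⟨hy0, hy1, hy2⟩ := hy
      refine ⟨?_, ?_, ?_⟩
      · intro i
        have he : (α • x + β • y) i = α * x i + β * y i := by simp
        rw [he]
        have h1 := mul_nonneg hα (hx0 i)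
        have h2 := mul_nonneg hβ (hy0 i)
        linarith
      · have he : ∑ i, (α • x + β • y) i = α * (∑ i, x i) + β * (∑ i, y i) := by
          simp [Finset.sum_add_distrib, Finset.mul_sum]
        rw [he, hx1, hy1]; linarith
      · intro i
        have he : (α • x + β • y) i = α * x i + β * y i := by simp
        rw [he]
        have h1 : α * x i ≤ α * (1 / (j:ℝ)) := mul_le_mul_of_nonneg_left (hx2 i) hα
        have h2 : β * y i ≤ β * (1 / (j:ℝ)) := mul_le_mul_of_nonneg_left (hy2 i) hβ
        have h3 : α * (1 / (j:ℝ)) + β * (1 / (j:ℝ)) = 1 / (j:ℝ) := by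
          rw [← add_mul, hαβ, one_mul]
        linarith
end

section
/- Theorem (j-point average characterization of the CVaR uncertainty set): Let d_1, …, d_N ∈ ℝ^m be the columns of a matrix D ∈ ℝ^{m×N}, and let 1 ≤ j ≤ N be integers. Then conv({D q : q ∈ ℝ^N, q_i ≥ 0, Σ_{i=1}^N q_i = 1, q_i ≤ 1/j for all i}) = conv({ (1/j) Σ_{i∈J} d_i : J ⊆ {1,…,N}, |J| = j }); that is, the uncertainty set obtained from the generating measures of CVaR with uniform probabilities 1/N and level α = j/N is exactly the convex hull of all j-point averages of the data points d_1, …, d_N. -/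
open Finset

lemma hypersimplex_mem_convexHull (N j : ℕ) :
    ∀ (n : ℕ) (x : Fin N → ℝ),
      ((univ.filter (fun i => x i ≠ 0 ∧ x i ≠ 1)).card ≤ n) →
      (∀ i, 0 ≤ x i) → (∀ i, x i ≤ 1) → (∑ i, x i = (j : ℝ)) →
      x ∈ convexHull ℝ {y : Fin N → ℝ |
        ∃ J : Finset (Fin N), J.card = j ∧ y = fun i => if i ∈ J then (1:ℝ) else 0} := by
  intro n
  induction n with
  | zero =>
    intro x hcard h0 h1 hsum
    have hF : (univ.filter (fun i => x i ≠ 0 ∧ x i ≠ 1)) = ∅ := by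
      rwa [Nat.le_zero, Finset.card_eq_zero] at hcard
    have hx01 : ∀ i, x i = 0 ∨ x i = 1 := by
      intro i
      by_contra h
      push_neg at h
      have : i ∈ (univ.filter (fun i => x i ≠ 0 ∧ x i ≠ 1)) := by
        simp [h.1, h.2]
      simp [hF] at this
    apply subset_convexHull
    refine ⟨univ.filter (fun i => x i = 1), ?_, ?_⟩
    · have : (∑ i, x i) = (((univ.filter (fun i => x i = 1)).card : ℕ) : ℝ) := by
        rw [Finset.card_filter]
        push_cast
        refine Finset.sum_congr rfl fun i _ => ?_
        rcases hx01 i with h | h <;> simp [h]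
      rw [hsum] at this
      exact_mod_cast this.symm
    · funext i
      rcases hx01 i with h | h <;> simp [h, Finset.mem_filter]
  | succ n ih =>
    intro x hcard h0 h1 hsum
    by_cases hle : (univ.filter (fun i => x i ≠ 0 ∧ x i ≠ 1)).card ≤ n
    · exact ih x hle h0 h1 hsum
    push_neg at hle
    set F := univ.filter (fun i => x i ≠ 0 ∧ x i ≠ 1) with hFdef
    have hFcard : F.card = n + 1 := le_antisymm hcard hle
    have hFne : F.Nonempty := Finset.card_pos.mp (by omega)
    obtain ⟨i, hiF⟩ := hFne
    have hi0 : x i ≠ 0 := (Finset.mem_filter.mp hiF).2.1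
    have hi1 : x i ≠ 1 := (Finset.mem_filter.mp hiF).2.2
    have hia : 0 < x i := lt_of_le_of_ne (h0 i) (Ne.symm hi0)
    have hib : x i < 1 := lt_of_le_of_ne (h1 i) hi1
    -- there is another fractional coordinate
    have hk : ∃ k ∈ F, k ≠ i := by
      by_contra h
      push_neg at h
      have hFi : F = {i} := by
        apply Finset.eq_singleton_iff_unique_mem.mpr
        exact ⟨hiF, fun k hkF => h k hkF⟩
      have hrest : ∀ l, l ≠ i → x l = 0 ∨ x l = 1 := by
        intro l hl
        by_contra hc
        push_neg at hc
        have : l ∈ F := by simp [hFdef, hc.1, hc.2]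
        rw [hFi] at this
        simp at this
        exact hl this
      set c : ℕ := ((univ.erase i).filter (fun l => x l = 1)).card with hcdef
      have hsum' : ∑ l ∈ univ.erase i, x l = (c : ℝ) := by
        rw [hcdef, Finset.card_filter]
        push_cast
        refine Finset.sum_congr rfl fun l hl => ?_
        rcases hrest l (Finset.mem_erase.mp hl).1 with h | h <;> simp [h]
      have hxi : x i = (j : ℝ) - (c : ℝ) := by
        have := Finset.add_sum_erase univ x (Finset.mem_univ i)
        rw [hsum] at this
        rw [hsum'] at this
        linarith
      have h1' : (c : ℝ) < (j : ℝ) := by linarith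
      have h2' : (j : ℝ) < (c : ℝ) + 1 := by linarith
      have : c < j := by exact_mod_cast h1'
      have : j < c + 1 := by exact_mod_cast h2'
      omega
    obtain ⟨k, hkF, hki⟩ := hk
    have hk0 : x k ≠ 0 := (Finset.mem_filter.mp hkF).2.1
    have hk1 : x k ≠ 1 := (Finset.mem_filter.mp hkF).2.2
    have hka : 0 < x k := lt_of_le_of_ne (h0 k) (Ne.symm hk0)
    have hkb : x k < 1 := lt_of_le_of_ne (h1 k) hk1
    set ε1 : ℝ := min (1 - x i) (x k) with hε1def
    set ε2 : ℝ := min (x i) (1 - x k) with hε2def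
    have hε1 : 0 < ε1 := lt_min (by linarith) hka
    have hε2 : 0 < ε2 := lt_min hia (by linarith)
    set y : Fin N → ℝ := fun l => x l + (if l = i then ε1 else 0) - (if l = k then ε1 else 0) with hydef
    set z : Fin N → ℝ := fun l => x l - (if l = i then ε2 else 0) + (if l = k then ε2 else 0) with hzdef
    have hik : i ≠ k := hki.symm
    -- bounds for y
    have hy0 : ∀ l, 0 ≤ y l := by
      intro l
      by_cases hli : l = i
      · subst hli; simp [hydef, hik, if_neg hik]; nlinarith [min_le_left (1 - x l) (x k)]
      by_cases hlk : l = k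
      · subst hlk
        simp [hydef, hli]
        have := min_le_right (1 - x i) (x l)
        linarith
      · simp [hydef, hli, hlk]; exact h0 l
    have hy1 : ∀ l, y l ≤ 1 := by
      intro l
      by_cases hli : l = i
      · subst hli
        simp [hydef, if_neg hik]
        have := min_le_left (1 - x l) (x k)
        linarith
      by_cases hlk : l = k
      · subst hlk; simp [hydef, hli]; linarith [h1 l, hε1]
      · simp [hydef, hli, hlk]; exact h1 l
    have hz0 : ∀ l, 0 ≤ z l := by
      intro l
      by_cases hli : l = i
      · subst hli
        simp [hzdef, if_neg hik]
        exact min_le_left (x l) (1 - x k)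
      by_cases hlk : l = k
      · subst hlk; simp [hzdef, hli]; linarith [h0 l, hε2]
      · simp [hzdef, hli, hlk]; exact h0 l
    have hz1 : ∀ l, z l ≤ 1 := by
      intro l
      by_cases hli : l = i
      · subst hli; simp [hzdef, if_neg hik]; linarith [h1 l, hε2]
      by_cases hlk : l = k
      · subst hlk
        simp [hzdef, hli]
        have := min_le_right (x i) (1 - x l)
        linarith
      · simp [hzdef, hli, hlk]; exact h1 l
    have hysum : ∑ l, y l = (j : ℝ) := by
      simp only [hydef, Finset.sum_sub_distrib, Finset.sum_add_distrib,
        Finset.sum_ite_eq', Finset.mem_univ, if_pos, hsum]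
      ring
    have hzsum : ∑ l, z l = (j : ℝ) := by
      simp only [hzdef, Finset.sum_sub_distrib, Finset.sum_add_distrib,
        Finset.sum_ite_eq', Finset.mem_univ, if_pos, hsum]
      ring
    -- fractional counts
    have hycard : (univ.filter (fun l => y l ≠ 0 ∧ y l ≠ 1)).card ≤ n := by
      rcases min_cases (1 - x i) (x k) with ⟨he, _⟩ | ⟨he, _⟩
      · -- ε1 = 1 - x i, y i = 1
        have hsub : (univ.filter (fun l => y l ≠ 0 ∧ y l ≠ 1)) ⊆ F.erase i := by
          intro l hl
          simp only [Finset.mem_filter, Finset.mem_univ, true_and] at hl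
          by_cases hli : l = i
          · exfalso; apply hl.2; subst hli; simp [hydef, if_neg hik]; linarith [he]
          by_cases hlk : l = k
          · subst hlk; exact Finset.mem_erase.mpr ⟨hki, hkF⟩
          · refine Finset.mem_erase.mpr ⟨hli, ?_⟩
            simp only [hydef, hli, hlk, if_false, add_zero, sub_zero] at hl
            simp [hFdef, hl.1, hl.2]
        calc (univ.filter (fun l => y l ≠ 0 ∧ y l ≠ 1)).card
            ≤ (F.erase i).card := Finset.card_le_card hsub
          _ = n := by rw [Finset.card_erase_of_mem hiF, hFcard]; omega
      · -- ε1 = x k, y k = 0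
        have hsub : (univ.filter (fun l => y l ≠ 0 ∧ y l ≠ 1)) ⊆ F.erase k := by
          intro l hl
          simp only [Finset.mem_filter, Finset.mem_univ, true_and] at hl
          by_cases hlk : l = k
          · exfalso; apply hl.1; subst hlk; simp [hydef, hki]; linarith [he]
          by_cases hli : l = i
          · subst hli; exact Finset.mem_erase.mpr ⟨hik, hiF⟩
          · refine Finset.mem_erase.mpr ⟨hlk, ?_⟩
            simp only [hydef, hli, hlk, if_false, add_zero, sub_zero] at hl
            simp [hFdef, hl.1, hl.2]
        calc (univ.filter (fun l => y l ≠ 0 ∧ y l ≠ 1)).card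
            ≤ (F.erase k).card := Finset.card_le_card hsub
          _ = n := by rw [Finset.card_erase_of_mem hkF, hFcard]; omega
    have hzcard : (univ.filter (fun l => z l ≠ 0 ∧ z l ≠ 1)).card ≤ n := by
      rcases min_cases (x i) (1 - x k) with ⟨he, _⟩ | ⟨he, _⟩
      · -- ε2 = x i, z i = 0
        have hsub : (univ.filter (fun l => z l ≠ 0 ∧ z l ≠ 1)) ⊆ F.erase i := by
          intro l hl
          simp only [Finset.mem_filter, Finset.mem_univ, true_and] at hl
          by_cases hli : l = i
          · exfalso; apply hl.1; subst hli; simp [hzdef, if_neg hik]; linarith [he]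
          by_cases hlk : l = k
          · subst hlk; exact Finset.mem_erase.mpr ⟨hki, hkF⟩
          · refine Finset.mem_erase.mpr ⟨hli, ?_⟩
            simp only [hzdef, hli, hlk, if_false, add_zero, sub_zero] at hl
            simp [hFdef, hl.1, hl.2]
        calc (univ.filter (fun l => z l ≠ 0 ∧ z l ≠ 1)).card
            ≤ (F.erase i).card := Finset.card_le_card hsub
          _ = n := by rw [Finset.card_erase_of_mem hiF, hFcard]; omega
      · -- ε2 = 1 - x k, z k = 1
        have hsub : (univ.filter (fun l => z l ≠ 0 ∧ z l ≠ 1)) ⊆ F.erase k := by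
          intro l hl
          simp only [Finset.mem_filter, Finset.mem_univ, true_and] at hl
          by_cases hlk : l = k
          · exfalso; apply hl.2; subst hlk; simp [hzdef, hki]; linarith [he]
          by_cases hli : l = i
          · subst hli; exact Finset.mem_erase.mpr ⟨hik, hiF⟩
          · refine Finset.mem_erase.mpr ⟨hlk, ?_⟩
            simp only [hzdef, hli, hlk, if_false, add_zero, sub_zero] at hl
            simp [hFdef, hl.1, hl.2]
        calc (univ.filter (fun l => z l ≠ 0 ∧ z l ≠ 1)).card
            ≤ (F.erase k).card := Finset.card_le_card hsub
          _ = n := by rw [Finset.card_erase_of_mem hkF, hFcard]; omega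
    have hy := ih y hycard hy0 hy1 hysum
    have hz := ih z hzcard hz0 hz1 hzsum
    have hsumε : ε1 + ε2 ≠ 0 := by positivity
    have hcomb : x = (ε2 / (ε1 + ε2)) • y + (ε1 / (ε1 + ε2)) • z := by
      funext l
      simp only [Pi.add_apply, Pi.smul_apply, smul_eq_mul, hydef, hzdef]
      by_cases hli : l = i
      · subst hli; simp only [if_pos rfl, if_neg hik]; field_simp; simp only [↓reduceIte]; ring
      by_cases hlk : l = k
      · subst hlk; simp only [if_neg hli, if_pos rfl]; field_simp; simp only [↓reduceIte]; ring
      · simp only [if_neg hli, if_neg hlk]; field_simp; ring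
    rw [hcomb]
    exact (convex_convexHull ℝ _) hy hz (by positivity) (by positivity)
      (by field_simp; ring)

/-- The CVaR uncertainty set (image of the capped simplex under the data matrix)
is exactly the convex hull of all `j`-point averages of the data points. -/
theorem uncertainty_set_eq_convexHull_j_point_averages
    (m N j : ℕ) (hj : 1 ≤ j) (hjN : j ≤ N)
    (d : Fin N → EuclideanSpace ℝ (Fin m)) :
    convexHull ℝ
        {u : EuclideanSpace ℝ (Fin m) | ∃ q : Fin N → ℝ,
          (∀ i, 0 ≤ q i) ∧ (∑ i, q i = 1) ∧ (∀ i, q i ≤ 1 / (j : ℝ)) ∧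
          u = ∑ i, q i • d i} =
      convexHull ℝ
        {u : EuclideanSpace ℝ (Fin m) | ∃ J : Finset (Fin N), J.card = j ∧
          u = (1 / (j : ℝ)) • ∑ i ∈ J, d i} := by
  have hjR : (j : ℝ) ≠ 0 := Nat.cast_ne_zero.mpr (by omega)
  have hjpos : (0 : ℝ) < j := by positivity
  apply Set.Subset.antisymm
  · -- hard direction
    apply convexHull_min ?_ (convex_convexHull ℝ _)
    rintro u ⟨q, hq0, hqsum, hqcap, rfl⟩
    set L : (Fin N → ℝ) →ₗ[ℝ] EuclideanSpace ℝ (Fin m) :=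
      { toFun := fun x => ∑ i, x i • ((1 / (j : ℝ)) • d i)
        map_add' := by
          intro a b
          simp [add_smul, Finset.sum_add_distrib]
        map_smul' := by
          intro c a
          simp [mul_smul, Finset.smul_sum] } with hLdef
    set x : Fin N → ℝ := fun i => (j : ℝ) * q i with hxdef
    have hx : x ∈ convexHull ℝ {y : Fin N → ℝ |
        ∃ J : Finset (Fin N), J.card = j ∧ y = fun i => if i ∈ J then (1:ℝ) else 0} := by
      refine hypersimplex_mem_convexHull N j
        ((univ.filter (fun i => x i ≠ 0 ∧ x i ≠ 1)).card) x le_rfl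
        (fun i => mul_nonneg hjpos.le (hq0 i)) (fun i => ?_) ?_
      · have := hqcap i
        calc x i = (j : ℝ) * q i := rfl
          _ ≤ (j : ℝ) * (1 / (j : ℝ)) := by
              exact mul_le_mul_of_nonneg_left this (le_of_lt hjpos)
          _ = 1 := by field_simp
      · simp only [hxdef, ← Finset.mul_sum, hqsum, mul_one]
    have hLx : L x ∈ convexHull ℝ (L '' {y : Fin N → ℝ |
        ∃ J : Finset (Fin N), J.card = j ∧ y = fun i => if i ∈ J then (1:ℝ) else 0}) := by
      rw [← L.image_convexHull]
      exact ⟨x, hx, rfl⟩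
    have himg : (L '' {y : Fin N → ℝ |
        ∃ J : Finset (Fin N), J.card = j ∧ y = fun i => if i ∈ J then (1:ℝ) else 0}) ⊆
        {u : EuclideanSpace ℝ (Fin m) | ∃ J : Finset (Fin N), J.card = j ∧
          u = (1 / (j : ℝ)) • ∑ i ∈ J, d i} := by
      rintro _ ⟨y, ⟨J, hJ, rfl⟩, rfl⟩
      refine ⟨J, hJ, ?_⟩
      simp only [hLdef, LinearMap.coe_mk, AddHom.coe_mk]
      simp only [ite_smul, one_smul, zero_smul]
      rw [Finset.sum_ite_mem, Finset.univ_inter, Finset.smul_sum]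
    have : L x = ∑ i, q i • d i := by
      simp only [hLdef, LinearMap.coe_mk, AddHom.coe_mk, hxdef]
      refine Finset.sum_congr rfl fun i _ => ?_
      rw [smul_smul]
      congr 1
      field_simp
    rw [← this]
    exact convexHull_mono himg hLx
  · -- easy direction
    apply convexHull_mono
    rintro u ⟨J, hJ, rfl⟩
    refine ⟨fun i => if i ∈ J then 1 / (j : ℝ) else 0, fun i => ?_, ?_, fun i => ?_, ?_⟩
    · by_cases h : i ∈ J <;> simp [h] <;> positivity
    · rw [Finset.sum_ite_mem, Finset.univ_inter, Finset.sum_const, hJ, nsmul_eq_mul]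
      field_simp
    · by_cases h : i ∈ J <;> simp [h]
    · simp only [ite_smul, zero_smul]
      rw [Finset.sum_ite_mem, Finset.univ_inter, Finset.smul_sum]
end

section
/- Robust uncertainty-set reformulation of a single CVaR constraint (finite-space version of Theorem 1): Let d_1, …, d_N ∈ ℝ^m be the columns of D ∈ ℝ^{m×N}, let p ∈ ℝ^N be a probability vector, α ∈ (0,1], and b ∈ ℝ. For x ∈ ℝ^m let X_x : {1,…,N} → ℝ be the random variable X_x(i) = ⟨d_i, x⟩ − b. Then CVaR_α(X_x) ≤ 0 if and only if ⟨u, x⟩ ≥ b for every u ∈ conv({D q : q ∈ Q_α}), where Q_α is the family of generating measures of CVaR_α. -/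
open Finset
open scoped RealInnerProductSpace

/-- Family of generating measures of `CVaR_α` on the finite probability space
`{1,…,N}` with probability vector `p`. -/
def Qset (N : ℕ) (p : Fin N → ℝ) (α : ℝ) : Set (Fin N → ℝ) :=
  {q | (∀ i, 0 ≤ q i) ∧ (∑ i, q i = 1) ∧ ∀ i, q i ≤ p i / α}

/-- Conditional Value at Risk of a random variable `X : {1,…,N} → ℝ`,
`CVaR_α(X) = max_{q ∈ Q_α} (1/N) ∑ᵢ -qᵢ X(i)`. -/
noncomputable def CVaR (N : ℕ) (p : Fin N → ℝ) (α : ℝ) (X : Fin N → ℝ) : ℝ :=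
  sSup ((fun q : Fin N → ℝ => (1 / (N : ℝ)) * ∑ i, (-q i) * X i) '' Qset N p α)

lemma key_calc (m N : ℕ) (d : Fin N → EuclideanSpace ℝ (Fin m)) (b : ℝ)
    (x : EuclideanSpace ℝ (Fin m)) (q : Fin N → ℝ) (hq : ∑ i, q i = 1) :
    ∑ i, (-q i) * (⟪d i, x⟫ - b) = b - ⟪∑ i, q i • d i, x⟫ := by
  rw [sum_inner]
  have : ∀ i, ⟪q i • d i, x⟫ = q i * ⟪d i, x⟫ := fun i => real_inner_smul_left _ _ _
  simp only [this]
  have : ∑ i, (-q i) * (⟪d i, x⟫ - b) = -(∑ i, q i * ⟪d i, x⟫) + b * ∑ i, q i := by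
    rw [← Finset.sum_neg_distrib, Finset.mul_sum, ← Finset.sum_add_distrib]
    apply Finset.sum_congr rfl; intro i _; ring
  rw [this, hq]; ring

/-- Robust uncertainty-set reformulation of a single CVaR constraint:
`CVaR_α(⟨dᵢ, x⟩ - b) ≤ 0` iff `⟨u, x⟩ ≥ b` for all `u` in the convex hull of
`{D q : q ∈ Q_α}`. -/
theorem cvar_constraint_iff_robust
    (m N : ℕ) (hN : 1 ≤ N) (p : Fin N → ℝ)
    (hp : ∀ i, 0 ≤ p i) (hps : ∑ i, p i = 1)
    (α : ℝ) (hα : 0 < α) (hα1 : α ≤ 1)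
    (d : Fin N → EuclideanSpace ℝ (Fin m)) (b : ℝ)
    (x : EuclideanSpace ℝ (Fin m)) :
    CVaR N p α (fun i => ⟪d i, x⟫ - b) ≤ 0 ↔
      ∀ u ∈ convexHull ℝ
          {u : EuclideanSpace ℝ (Fin m) | ∃ q ∈ Qset N p α, u = ∑ i, q i • d i},
        b ≤ ⟪u, x⟫ := by
  have hNpos : (0:ℝ) < (N:ℝ) := by exact_mod_cast hN
  have hNinv : (0:ℝ) < 1 / (N:ℝ) := by positivity
  set X : Fin N → ℝ := fun i => ⟪d i, x⟫ - b with hX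
  set S := {u : EuclideanSpace ℝ (Fin m) | ∃ q ∈ Qset N p α, u = ∑ i, q i • d i}
  -- bddAbove of the image
  have hbdd : BddAbove ((fun q : Fin N → ℝ => (1 / (N : ℝ)) * ∑ i, (-q i) * X i) '' Qset N p α) := by
    refine ⟨(1 / (N:ℝ)) * ∑ i, (p i / α) * |X i|, ?_⟩
    rintro y ⟨q, ⟨hq0, hq1, hqle⟩, rfl⟩
    apply mul_le_mul_of_nonneg_left _ (le_of_lt hNinv)
    apply Finset.sum_le_sum
    intro i _
    have h1 : (-q i) * X i ≤ q i * |X i| := by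
      have := neg_abs_le (X i)
      nlinarith [hq0 i, abs_nonneg (X i)]
    have h2 : q i * |X i| ≤ (p i / α) * |X i| :=
      mul_le_mul_of_nonneg_right (hqle i) (abs_nonneg _)
    exact le_trans h1 h2
  -- membership: p ∈ Qset
  have hpmem : p ∈ Qset N p α := by
    refine ⟨hp, hps, fun i => ?_⟩
    rw [le_div_iff₀ hα]
    nlinarith [hp i]
  have hconv : Convex ℝ {u : EuclideanSpace ℝ (Fin m) | b ≤ ⟪u, x⟫} :=
    convex_halfSpace_ge ⟨fun a c => inner_add_left a c x,
      fun c a => real_inner_smul_left a x c⟩ b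
  constructor
  · intro hC
    intro u hu
    have hsub : convexHull ℝ S ⊆ {u : EuclideanSpace ℝ (Fin m) | b ≤ ⟪u, x⟫} := by
      apply convexHull_min _ hconv
      rintro u ⟨q, ⟨hq0, hq1, hqle⟩, rfl⟩
      have hle : (1 / (N:ℝ)) * ∑ i, (-q i) * X i ≤ 0 :=
        le_trans (le_csSup hbdd ⟨q, ⟨hq0, hq1, hqle⟩, rfl⟩) hC
      have hsum : ∑ i, (-q i) * X i ≤ 0 := by
        by_contra h
        push_neg at h
        nlinarith
      rw [key_calc m N d b x q hq1] at hsum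
      simp only [Set.mem_setOf_eq]
      linarith
    exact hsub hu
  · intro hR
    apply Real.sSup_le _ le_rfl
    rintro y ⟨q, hq, rfl⟩
    have hu : (∑ i, q i • d i) ∈ S := ⟨q, hq, rfl⟩
    have := hR _ (subset_convexHull ℝ S hu)
    have hc := key_calc m N d b x q hq.2.1
    have : ∑ i, (-q i) * X i ≤ 0 := by rw [hc]; linarith
    nlinarith
end

section
/- Top-j average formula for CVaR with uniform probabilities: let p_i = 1/N for all i and α = j/N for an integer 1 ≤ j ≤ N. Then for every X : {1,…,N} → ℝ, CVaR_{j/N}(X) = (1/(N·j)) · max{ Σ_{i∈J} (−X(i)) : J ⊆ {1,…,N}, |J| = j }; that is, the maximum over the generating measures Q_{j/N} is attained at a uniform measure supported on j indices where −X is largest. -/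
open Finset

/-- Top-`j` average formula for CVaR with uniform probabilities:
`CVaR_{j/N}(X) = (1/(N·j)) · max { ∑_{i ∈ J} (-X i) : |J| = j }`. -/
theorem cvar_uniform_top_j_average
    (N j : ℕ) (hN : 1 ≤ N) (hj : 1 ≤ j) (hjN : j ≤ N)
    (X : Fin N → ℝ) :
    CVaR N (fun _ => 1 / (N : ℝ)) ((j : ℝ) / N) X =
      (1 / ((N : ℝ) * j)) *
        sSup {s : ℝ | ∃ J : Finset (Fin N), J.card = j ∧ s = ∑ i ∈ J, -X i} := by
  have hN0 : (0:ℝ) < N := by exact_mod_cast hN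
  have hj0 : (0:ℝ) < j := by exact_mod_cast hj
  -- optimal j-subset J₀
  have hpne : ((univ : Finset (Fin N)).powersetCard j).Nonempty := by
    rw [Finset.powersetCard_nonempty]; simpa using hjN
  obtain ⟨J₀, hJ₀mem, hJ₀max⟩ :=
    Finset.exists_max_image _ (fun J : Finset (Fin N) => ∑ i ∈ J, -X i) hpne
  have hJ₀card : J₀.card = j := (Finset.mem_powersetCard.mp hJ₀mem).2
  set M : ℝ := ∑ i ∈ J₀, -X i with hM
  have hJmax : ∀ J : Finset (Fin N), J.card = j → ∑ i ∈ J, -X i ≤ M := by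
    intro J hJ
    exact hJ₀max J (Finset.mem_powersetCard.mpr ⟨Finset.subset_univ _, hJ⟩)
  have hJ₀ne : J₀.Nonempty := Finset.card_pos.mp (by omega)
  -- exchange argument
  have key : ∀ i ∉ J₀, ∀ k ∈ J₀, -X i ≤ -X k := by
    intro i hi k hk
    have hie : i ∉ J₀.erase k := fun h => hi (Finset.mem_of_mem_erase h)
    have hcard : (insert i (J₀.erase k)).card = j := by
      rw [Finset.card_insert_of_notMem hie, Finset.card_erase_of_mem hk, hJ₀card]
      omega
    have hsum := hJmax _ hcard
    rw [Finset.sum_insert hie] at hsum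
    have herase := Finset.add_sum_erase J₀ (fun x => -X x) hk
    rw [← hM] at herase
    linarith
  -- threshold
  obtain ⟨k₀, hk₀, hk₀min⟩ :=
    Finset.exists_min_image J₀ (fun k => -X k) hJ₀ne
  replace hk₀min : ∀ b ∈ J₀, -X k₀ ≤ -X b := hk₀min
  set t : ℝ := -X k₀ with ht
  -- upper bound for every q in Qset
  have hub : ∀ q ∈ Qset N (fun _ => 1 / (N : ℝ)) ((j : ℝ) / N),
      ∑ i, (-q i) * X i ≤ M / j := by
    rintro q ⟨hq0, hq1, hqb⟩
    have hqb' : ∀ i, q i ≤ 1 / j := by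
      intro i
      have := hqb i
      have h : (1 / (N : ℝ)) / ((j : ℝ) / N) = 1 / j := by
        field_simp
      rwa [h] at this
    have hsplit : ∑ i, (-q i) * X i = ∑ i, q i * (-X i - t) + t := by
      have h2 : ∑ i, q i * (-X i - t) = ∑ i, (-q i) * X i - t * ∑ i, q i := by
        rw [Finset.mul_sum, ← Finset.sum_sub_distrib]
        exact Finset.sum_congr rfl fun i _ => by ring
      rw [h2, hq1]; ring
    rw [hsplit]
    have h1 : ∑ i, q i * (-X i - t) ≤ ∑ i ∈ J₀, (1/(j:ℝ)) * (-X i - t) := by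
      rw [← Finset.sum_add_sum_compl J₀ (fun i => q i * (-X i - t))]
      have hA : ∑ i ∈ J₀, q i * (-X i - t) ≤ ∑ i ∈ J₀, (1/(j:ℝ)) * (-X i - t) := by
        apply Finset.sum_le_sum
        intro i hi
        have hnn : 0 ≤ -X i - t := by have := hk₀min i hi; linarith
        exact mul_le_mul_of_nonneg_right (hqb' i) hnn
      have hB : ∑ i ∈ J₀ᶜ, q i * (-X i - t) ≤ 0 := by
        apply Finset.sum_nonpos
        intro i hi
        have hi' : i ∉ J₀ := Finset.mem_compl.mp hi
        have hle : -X i - t ≤ 0 := by have := key i hi' k₀ hk₀; linarith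
        exact mul_nonpos_of_nonneg_of_nonpos (hq0 i) hle
      linarith
    have h2 : ∑ i ∈ J₀, (1/(j:ℝ)) * (-X i - t) = M / j - t := by
      rw [← Finset.mul_sum, Finset.sum_sub_distrib, Finset.sum_const, hJ₀card, nsmul_eq_mul, ← hM]
      field_simp
    rw [h2] at h1
    linarith
  -- the optimal q
  set qs : Fin N → ℝ := fun i => if i ∈ J₀ then 1/(j:ℝ) else 0 with hqs
  have hqsQ : qs ∈ Qset N (fun _ => 1 / (N : ℝ)) ((j : ℝ) / N) := by
    refine ⟨fun i => ?_, ?_, fun i => ?_⟩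
    · simp only [hqs]; positivity
    · simp only [hqs]
      rw [Finset.sum_ite_mem, Finset.univ_inter, Finset.sum_const, hJ₀card, nsmul_eq_mul]
      field_simp
    · have h : (1 / (N : ℝ)) / ((j : ℝ) / N) = 1 / j := by field_simp
      rw [h]
      simp only [hqs]
      split
      · exact le_rfl
      · positivity
  have hqsval : ∑ i, (-qs i) * X i = M / j := by
    have : ∀ i, (-qs i) * X i = if i ∈ J₀ then (1/(j:ℝ)) * (-X i) else 0 := by
      intro i
      simp only [hqs]
      split <;> ring
    rw [Finset.sum_congr rfl fun i _ => this i, Finset.sum_ite_mem, Finset.univ_inter,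
      ← Finset.mul_sum, ← hM]
    ring
  -- RHS sSup = M
  have hTub : ∀ s ∈ {s : ℝ | ∃ J : Finset (Fin N), J.card = j ∧ s = ∑ i ∈ J, -X i}, s ≤ M := by
    rintro s ⟨J, hJ, rfl⟩
    exact hJmax J hJ
  have hT : sSup {s : ℝ | ∃ J : Finset (Fin N), J.card = j ∧ s = ∑ i ∈ J, -X i} = M := by
    refine le_antisymm (csSup_le ⟨M, ⟨J₀, hJ₀card, hM⟩⟩ hTub) ?_
    exact le_csSup ⟨M, hTub⟩ ⟨J₀, hJ₀card, hM⟩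
  rw [hT]
  -- LHS sSup
  unfold CVaR
  have himgub : ∀ s ∈ ((fun q : Fin N → ℝ => (1 / (N : ℝ)) * ∑ i, (-q i) * X i) ''
      Qset N (fun _ => 1 / (N : ℝ)) ((j : ℝ) / N)), s ≤ 1 / ((N:ℝ) * j) * M := by
    rintro s ⟨q, hq, rfl⟩
    have h := hub q hq
    calc (1 / (N : ℝ)) * ∑ i, (-q i) * X i
        ≤ (1 / (N : ℝ)) * (M / j) := mul_le_mul_of_nonneg_left h (by positivity)
      _ = 1 / ((N:ℝ) * j) * M := by field_simp
  have hmem : 1 / ((N:ℝ) * j) * M ∈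
      ((fun q : Fin N → ℝ => (1 / (N : ℝ)) * ∑ i, (-q i) * X i) ''
        Qset N (fun _ => 1 / (N : ℝ)) ((j : ℝ) / N)) := by
    refine ⟨qs, hqsQ, ?_⟩
    show (1 / (N : ℝ)) * ∑ i, (-qs i) * X i = _
    rw [hqsval]
    field_simp
  exact le_antisymm (csSup_le ⟨_, hmem⟩ himgub) (le_csSup ⟨_, himgub⟩ hmem)
end
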